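/- The logarithm coefficients of the alternating square of φ are given by the L̃_0 series: let c_m ∈ K be defined by c_0 = 1 and c_m = −κ_2·c_{m−1}/(θ − θ^{q^m}) for m ≥ 1 (so c_m = (−κ_2)^m/∏_{i=1}^m(θ − θ^{q^i}) are the coefficients of Log_{Alt²φ}(z) = Σ_m c_m z^{q^m}, where (Alt²φ)_t = θ − κ_2τ is the rank-1 alternating square of φ). Then for every m ≥ 1, c_m = L̃_{0,m} = κ_2(β_m β̃_{m−2} − β_{m−1} β̃_{m−1})/(θ − θ^q). -/

import Mathlib

/-- **The logarithm coefficients of the alternating square are the `L̃₀` coefficients.**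
Let `K = 𝔽_q(θ)`, `φ_t = θ + κ₁τ + κ₂τ²` with `κ₁ ∈ 𝔽_q[θ]`, `κ₂ ∈ 𝔽_q^×`, `p` odd.
If `(c_m)` are the logarithm coefficients of the rank-1 alternating square
`(Alt²φ)_t = θ - κ₂τ`, i.e. `c_0 = 1` and `c_m = -κ₂ c_{m-1}/(θ - θ^{q^m})` for `m ≥ 1`,
then `c_m = L̃_{0,m} = κ₂ (β_m β̃_{m-2} - β_{m-1} β̃_{m-1})/(θ - θ^q)` for all `m ≥ 1`. -/
theorem logCoeff_altSquare_eq
    (p : ℕ) [Fact p.Prime] (hp : p ≠ 2)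
    (Fq : Type) [Field Fq] [Fintype Fq] [CharP Fq p]
    (q : ℕ) (hq : q = Fintype.card Fq)
    (κ₁ : Polynomial Fq) (κ₂ : Fqˣ)
    (θ k1 k2 : RatFunc Fq)
    (hθ : θ = RatFunc.X)
    (hk1 : k1 = algebraMap (Polynomial Fq) (RatFunc Fq) κ₁)
    (hk2 : k2 = algebraMap (Polynomial Fq) (RatFunc Fq) (Polynomial.C (κ₂ : Fq)))
    -- the logarithm coefficients β_m of φ
    (β : ℤ → RatFunc Fq)
    (hβneg : ∀ m : ℤ, m < 0 → β m = 0)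
    (hβ0 : β 0 = 1)
    (hβrec : ∀ m : ℤ, 1 ≤ m →
      β m = (k1 ^ q ^ (m - 1).toNat * β (m - 1) + k2 * β (m - 2)) /
        (θ - θ ^ q ^ m.toNat))
    -- the values β̃_m at t = θ of the once-twisted El-Guindy–Papanikolas functions
    (βt : ℤ → RatFunc Fq)
    (hβtneg : ∀ m : ℤ, m < 0 → βt m = 0)
    (hβt0 : βt 0 = 1)
    (hβtrec : ∀ m : ℤ, 1 ≤ m →
      βt m = (k1 ^ q ^ m.toNat * βt (m - 1) + k2 * βt (m - 2)) /
        (θ - θ ^ q ^ (m + 1).toNat))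
    -- the logarithm coefficients of the alternating square (Alt²φ)_t = θ - κ₂τ
    (c : ℤ → RatFunc Fq)
    (hc0 : c 0 = 1)
    (hcrec : ∀ m : ℤ, 1 ≤ m →
      c m = -k2 * c (m - 1) / (θ - θ ^ q ^ m.toNat)) :
    ∀ m : ℤ, 1 ≤ m →
      c m = k2 * (β m * βt (m - 2) - β (m - 1) * βt (m - 1)) / (θ - θ ^ q) := by
  subst hθ
  have hq2 : 2 ≤ q := by rw [hq]; exact Fintype.one_lt_card
  have hd : ∀ N : ℕ, 2 ≤ N → (RatFunc.X : RatFunc Fq) - RatFunc.X ^ N ≠ 0 := by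
    intro N hN
    rw [sub_ne_zero]
    have hpoly : (Polynomial.X : Polynomial Fq) ≠ Polynomial.X ^ N := by
      intro h
      have := congrArg Polynomial.natDegree h
      simp [Polynomial.natDegree_X_pow] at this
      omega
    intro h
    apply hpoly
    apply RatFunc.algebraMap_injective Fq
    simpa [map_pow] using h
  have hdpow : ∀ N : ℕ, 1 ≤ N → (RatFunc.X : RatFunc Fq) - RatFunc.X ^ q ^ N ≠ 0 := by
    intro N hN
    apply hd
    calc 2 ≤ q := hq2
    _ ≤ q ^ N := Nat.le_self_pow (by omega) q
  intro m hm
  refine Int.le_induction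
    (motive := fun n _ => c n =
      k2 * (β n * βt (n - 2) - β (n - 1) * βt (n - 1)) / (RatFunc.X - RatFunc.X ^ q))
    ?_ ?_ m hm
  · show c 1 = _
    rw [hcrec 1 le_rfl]
    norm_num [hc0, hβ0, hβt0, hβtneg (-1) (by norm_num)]
    try ring
  · intro m hm ih
    show c (m+1) = _
    have hdm : (RatFunc.X : RatFunc Fq) - RatFunc.X ^ q ^ (m + 1).toNat ≠ 0 := by
      apply hdpow; omega
    have hd1 : (RatFunc.X : RatFunc Fq) - RatFunc.X ^ q ≠ 0 := by
      have := hdpow 1 le_rfl; simpa using this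
    have e1 : m + 1 - 1 = m := by ring
    have e2 : m + 1 - 2 = m - 1 := by ring
    have hβrec' := hβrec (m + 1) (by omega)
    have hβtrec' := hβtrec m (by omega)
    have hc' := hcrec (m + 1) (by omega)
    simp only [e1, e2] at hβrec' hc' ⊢
    rw [hβrec', hβtrec', hc', ih]
    field_simp
    ring
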